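/- arXiv:1406.6721 — 5 statements merged into one kernel-verified Lean document; each statement's English description precedes it below -/
import Mathlib

section
/- Suppose (x_n, y_n) satisfies x_{n+1} = α_n x_n / y_n and y_{n+1} = β'_n y_n / (x_n + B_n y_n), where β'_n = α_{n+1}/(a α_n) and B_n = b/(a α_n) with a ≠ 0 and α_n ≠ 0 for all n. Then x_{n+2} = a x_{n+1}^2 + b x_{n+1} for all n. -/
/-- The rational system (rhsc) folds to the first-order quadratic core
x_{n+2} = a x_{n+1}^2 + b x_{n+1}. -/
theorem rational_system_folds_to_quadratic
    (a b : ℝ) (ha : a ≠ 0)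
    (α β' B x y : ℕ → ℝ)
    (hα : ∀ n, α n ≠ 0)
    (hβ' : ∀ n, β' n = α (n + 1) / (a * α n))
    (hB : ∀ n, B n = b / (a * α n))
    (hy : ∀ n, y n ≠ 0)
    (hden : ∀ n, x n + B n * y n ≠ 0)
    (hrx : ∀ n, x (n + 1) = α n * x n / y n)
    (hry : ∀ n, y (n + 1) = β' n * y n / (x n + B n * y n)) :
    ∀ n, x (n + 2) = a * x (n + 1) ^ 2 + b * x (n + 1) := by
  intro n
  have hd := hden n
  rw [hB n] at hd
  have h1 : x (n + 2) = α (n + 1) * x (n + 1) / y (n + 1) := hrx (n + 1)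
  rw [h1, hry n, hβ' n, hB n, hrx n]
  have h2 := hα n
  have h3 := hα (n+1)
  have h4 := hy n
  field_simp at hd ⊢
end

section
/- Let a < 0, 0 < b < 4, and let r_{n+1} = a r_n^2 + b r_n with r_0 ∈ (0, -b/a). Define x_{n+1} = r_n (with appropriate x_0) and y_n = α_n x_n / x_{n+1} for a bounded sequence α_n. Then |y_n| ≤ (16 / (b^2 (4-b))) |α_n| for all n sufficiently large; in particular, the orbit (x_n, y_n) is bounded if α_n is bounded. -/
/-- Boundedness of the orbit: eventually |y_n| ≤ (16/(b²(4-b))) |α_n|, and the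
orbit (x_n, y_n) is bounded if α_n is bounded. -/
theorem orbit_bounded
    (a b : ℝ) (ha : a < 0) (hb0 : 0 < b) (hb4 : b < 4)
    (r x y α : ℕ → ℝ)
    (hr0 : r 0 ∈ Set.Ioo 0 (-b / a))
    (hrec : ∀ n, r (n + 1) = a * r n ^ 2 + b * r n)
    (hx : ∀ n, x (n + 1) = r n)
    (hy : ∀ n, y n = α n * x n / x (n + 1))
    (hαbd : ∃ C, ∀ n, |α n| ≤ C) :
    (∃ N, ∀ n, N ≤ n → |y n| ≤ 16 / (b ^ 2 * (4 - b)) * |α n|) ∧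
      ∃ C', ∀ n, |x n| ≤ C' ∧ |y n| ≤ C' := by
  have hA : (0:ℝ) < -a := by linarith
  -- r stays in (0, -b/a)
  have key : ∀ n, 0 < r n ∧ r n < -b / a := by
    intro n
    induction n with
    | zero => exact ⟨hr0.1, hr0.2⟩
    | succ n ih =>
      obtain ⟨h1, h2⟩ := ih
      have hlin : 0 < a * r n + b := by
        have h3 : a * (-b / a) < a * r n := mul_lt_mul_of_neg_left h2 ha
        have h4 : a * (-b / a) = -b := by
          rw [mul_div_assoc', div_eq_iff (ne_of_lt ha)]; ring
        linarith
      rw [hrec]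
      constructor
      · nlinarith
      · have hle : a * r n ^ 2 + b * r n ≤ b ^ 2 / (4 * (-a)) := by
          rw [le_div_iff₀ (by linarith)]
          nlinarith [sq_nonneg (2 * a * r n + b)]
        have hlt : b ^ 2 / (4 * (-a)) < -b / a := by
          have hrw : -b / a = b / (-a) := by rw [neg_div, div_neg]
          rw [hrw, div_lt_div_iff₀ (by linarith) hA]
          nlinarith [mul_pos hA (mul_pos hb0 (show (0:ℝ) < 4 - b by linarith))]
        linarith
  have hmax : ∀ n, r (n + 1) ≤ b ^ 2 / (4 * (-a)) := by
    intro n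
    rw [hrec, le_div_iff₀ (by linarith)]
    nlinarith [sq_nonneg (2 * a * r n + b)]
  have h4b : (0:ℝ) < 4 - b := by linarith
  have hbb : (0:ℝ) < b ^ 2 * (4 - b) := mul_pos (pow_pos hb0 2) h4b
  have hK : 0 < 16 / (b ^ 2 * (4 - b)) := div_pos (by norm_num) hbb
  -- ratio bound
  have hratio : ∀ m, 0 ≤ r (m + 1) / r (m + 2) ∧
      r (m + 1) / r (m + 2) ≤ 16 / (b ^ 2 * (4 - b)) := by
    intro m
    have hs0 : 0 < r (m + 1) := (key _).1
    have hsM : r (m + 1) ≤ b ^ 2 / (4 * (-a)) := hmax m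
    have has : a * (b ^ 2 / (4 * (-a))) ≤ a * r (m + 1) :=
      mul_le_mul_of_nonpos_left hsM (le_of_lt ha)
    have heq : a * (b ^ 2 / (4 * (-a))) = -(b ^ 2 / 4) := by
      rw [mul_div_assoc', div_eq_iff (show (4:ℝ) * -a ≠ 0 from (by linarith : (0:ℝ) < 4 * -a).ne')]
      ring
    have hsb : b ^ 2 * (4 - b) / 16 ≤ a * r (m + 1) + b := by nlinarith [sq_nonneg (b - 4)]
    have hsb0 : 0 < a * r (m + 1) + b := lt_of_lt_of_le (by linarith [mul_pos hbb (show (0:ℝ) < 1/16 by norm_num)] : (0:ℝ) < b ^ 2 * (4 - b) / 16) hsb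
    have hr2 : r (m + 2) = r (m + 1) * (a * r (m + 1) + b) := by rw [hrec]; ring
    have hpos2 : 0 < r (m + 2) := (key _).1
    constructor
    · positivity
    · rw [hr2]
      have hdiv : r (m + 1) / (r (m + 1) * (a * r (m + 1) + b)) = 1 / (a * r (m + 1) + b) := by
        field_simp
      rw [hdiv, div_le_div_iff₀ hsb0 hbb]
      nlinarith
  have hyb : ∀ m, |y (m + 2)| ≤ 16 / (b ^ 2 * (4 - b)) * |α (m + 2)| := by
    intro m
    have h1 : y (m + 2) = α (m + 2) * (r (m + 1) / r (m + 2)) := by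
      rw [hy]
      have e1 : x (m + 2) = r (m + 1) := hx (m + 1)
      have e2 : x (m + 2 + 1) = r (m + 2) := hx (m + 2)
      rw [e1, e2]; ring
    obtain ⟨hq0, hq1⟩ := hratio m
    calc |y (m + 2)| = |α (m + 2)| * (r (m + 1) / r (m + 2)) := by
          rw [h1, abs_mul, abs_of_nonneg hq0]
      _ ≤ |α (m + 2)| * (16 / (b ^ 2 * (4 - b))) := by
          exact mul_le_mul_of_nonneg_left hq1 (abs_nonneg _)
      _ = 16 / (b ^ 2 * (4 - b)) * |α (m + 2)| := by ring
  constructor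
  · refine ⟨2, fun n hn => ?_⟩
    obtain ⟨m, rfl⟩ : ∃ m, n = m + 2 := ⟨n - 2, by omega⟩
    exact hyb m
  · obtain ⟨C, hC⟩ := hαbd
    have hC0 : 0 ≤ C := le_trans (abs_nonneg _) (hC 0)
    refine ⟨max (max (|x 0|) (-b / a)) (max (max (|y 0|) (|y 1|)) (16 / (b ^ 2 * (4 - b)) * C)),
      fun n => ?_⟩
    constructor
    · refine le_trans ?_ (le_max_left _ _)
      match n with
      | 0 => exact le_max_left _ _
      | (k + 1) =>
        refine le_trans ?_ (le_max_right _ _)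
        rw [hx k, abs_of_pos (key k).1]
        exact le_of_lt (key k).2
    · refine le_trans ?_ (le_max_right _ _)
      match n with
      | 0 => exact le_trans (le_max_left _ _) (le_max_left _ _)
      | 1 => exact le_trans (le_max_right _ _) (le_max_left _ _)
      | (m + 2) =>
        refine le_trans (hyb m) (le_trans ?_ (le_max_right _ _))
        exact mul_le_mul_of_nonneg_left (hC _) (le_of_lt hK)
end

section
/- Suppose f: ℕ × S × S → S is globally semi-invertible with semi-inversion h satisfying h(n,u,f(n,u,v)) = v and f(n,u,h(n,u,w)) = w for all n,u,v,w. Given any φ: ℕ × S × S → S, define g(n,u,v) = h(n+1, f(n,u,v), φ(n,u,f(n,u,v))). Then the system x_{n+1} = f(n,x_n,y_n), y_{n+1} = g(n,x_n,y_n) folds to the equation s_{n+2} = φ(n,s_n,s_{n+1}): i.e., f(n+1, f(n,u,v), g(n,u,v)) = φ(n,u,f(n,u,v)) for all n,u,v; consequently any orbit satisfies x_{n+2} = φ(n, x_n, x_{n+1}). -/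
/-- Inverse problem (unfolding): given f with semi-inversion h and prescribed core φ,
the system with g(n,u,v) = h(n+1, f(n,u,v), φ(n,u,f(n,u,v))) folds to
s_{n+2} = φ(n, s_n, s_{n+1}). -/
theorem unfolding_theorem {S : Type*}
    (f h φ g : ℕ → S → S → S)
    (hsemi : ∀ n u v, h n u (f n u v) = v)
    (hsemi' : ∀ n u w, f n u (h n u w) = w)
    (hg : ∀ n u v, g n u v = h (n + 1) (f n u v) (φ n u (f n u v))) :
    (∀ n u v, f (n + 1) (f n u v) (g n u v) = φ n u (f n u v)) ∧
      ∀ x y : ℕ → S,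
        (∀ n, x (n + 1) = f n (x n) (y n)) →
        (∀ n, y (n + 1) = g n (x n) (y n)) →
        ∀ n, x (n + 2) = φ n (x n) (x (n + 1)) := by
  have key : ∀ n u v, f (n + 1) (f n u v) (g n u v) = φ n u (f n u v) := by
    intro n u v
    rw [hg, hsemi']
  refine ⟨key, fun x y hx hy n => ?_⟩
  have : x (n + 2) = f (n + 1) (x (n + 1)) (y (n + 1)) := hx (n + 1)
  rw [this, hx n, hy n, key]
end

section
/- Suppose (x_n, y_n) satisfies x_{n+1} = α_n x_n / y_n and y_{n+1} = α_n α_{n+1} / ((a x_n + b) y_n) with all α_n ≠ 0 and all denominators nonzero. Then x_{n+2} = a x_n^2 + b x_n for all n. -/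
/-- The rational system (rnh) folds to the second-order core
x_{n+2} = a x_n² + b x_n. -/
theorem rnh_folds
    (a b : ℝ)
    (α x y : ℕ → ℝ)
    (hα : ∀ n, α n ≠ 0)
    (hy : ∀ n, y n ≠ 0)
    (hx0 : ∀ n, x n ≠ 0)
    (hden : ∀ n, a * x n + b ≠ 0)
    (hrx : ∀ n, x (n + 1) = α n * x n / y n)
    (hry : ∀ n, y (n + 1) = α n * α (n + 1) / ((a * x n + b) * y n)) :
    ∀ n, x (n + 2) = a * x n ^ 2 + b * x n := by
  intro n
  have h1 := hrx (n + 1)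
  rw [hrx n, hry n] at h1
  rw [h1]
  field_simp [hα n, hα (n+1), hy n, hden n]
end

section
/- Suppose (x_n, y_n) satisfies x_{n+1} = α_n x_n / y_n and y_{n+1} = α_n α_{n+1} x_n / (α_n b x_n + (a x_n + c) y_n) with all α_n ≠ 0 and all denominators nonzero. Then x_{n+2} = a x_n + b x_{n+1} + c for all n (the core of the folding is an affine second-order equation). -/
/-- The rational system (lna) folds to the affine second-order core
x_{n+2} = a x_n + b x_{n+1} + c. -/
theorem lna_folds
    (a b c : ℝ)
    (α x y : ℕ → ℝ)
    (hα : ∀ n, α n ≠ 0)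
    (hy : ∀ n, y n ≠ 0)
    (hx0 : ∀ n, x n ≠ 0)
    (hden : ∀ n, α n * b * x n + (a * x n + c) * y n ≠ 0)
    (hrx : ∀ n, x (n + 1) = α n * x n / y n)
    (hry : ∀ n, y (n + 1) =
      α n * α (n + 1) * x n / (α n * b * x n + (a * x n + c) * y n)) :
    ∀ n, x (n + 2) = a * x n + b * x (n + 1) + c := by
  intro n
  have h1 : x (n + 2) = α (n + 1) * x (n + 1) / y (n + 1) := hrx (n + 1)
  rw [h1, hry n, hrx n, div_div_eq_mul_div,
    div_eq_iff (mul_ne_zero (mul_ne_zero (hα n) (hα (n + 1))) (hx0 n))]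
  field_simp [hy n]
  ring
end
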